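/- Let λ ∈ ℝⁿ, let A = diag(λ) be the corresponding real diagonal matrix viewed as an n×n Hermitian matrix, and let 𝒪 = {uAu* : u ∈ U(n)} be its conjugacy class under unitary conjugation inside the Hermitian matrices. Then the image δ(𝒪) = {(X₁₁, …, Xₙₙ) : X ∈ 𝒪} ⊂ ℝⁿ of 𝒪 under the map taking a Hermitian matrix to its (real) diagonal vector equals the convex hull of the finite set {(λ_{σ(1)}, …, λ_{σ(n)}) : σ ∈ Sym_n} of all permutations of the coordinates of λ; in particular δ(𝒪) is a convex polytope. -/

import Mathlib

open Matrix Finset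

namespace HornAux

variable {n : ℕ}

/-- One "mixing" (T-transform) step on two coordinates. -/
def MixStep (d v : Fin n → ℝ) : Prop :=
  ∃ j k : Fin n, j ≠ k ∧ v j ∈ Set.uIcc (d j) (d k) ∧ v j + v k = d j + d k ∧
    ∀ i, i ≠ j → i ≠ k → v i = d i

/-- Reachability by finitely many mixing steps. -/
def Chain (d v : Fin n → ℝ) : Prop := Relation.ReflTransGen MixStep d v

/-- The initial segment `{i : Fin n | i.val < m}` as a finset. -/
def F (n m : ℕ) : Finset (Fin n) := univ.filter (fun i : Fin n => (i : ℕ) < m)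

lemma mem_F {m : ℕ} {i : Fin n} : i ∈ F n m ↔ (i : ℕ) < m := by simp [F]

lemma F_subset {m₁ m₂ : ℕ} (h : m₁ ≤ m₂) : F n m₁ ⊆ F n m₂ := by
  intro x hx; rw [mem_F] at *; omega

lemma mixStep_swap (d : Fin n → ℝ) {a b : Fin n} (hab : a ≠ b) :
    MixStep d (d ∘ Equiv.swap a b) := by
  refine ⟨a, b, hab, ?_, ?_, ?_⟩
  · simp [Equiv.swap_apply_left, Set.right_mem_uIcc]
  · simp [Equiv.swap_apply_left, Equiv.swap_apply_right]; ring
  · intro i hia hib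
    simp [Equiv.swap_apply_of_ne_of_ne hia hib]

lemma chain_perm (σ : Equiv.Perm (Fin n)) (d : Fin n → ℝ) : Chain d (d ∘ σ) := by
  refine Equiv.Perm.swap_induction_on σ (fun d => ?_) (fun f x y hxy ih d => ?_) d
  · simpa [Chain] using (Relation.ReflTransGen.refl : Chain d d)
  · have h1 : Chain d (d ∘ Equiv.swap x y) :=
      Relation.ReflTransGen.single (mixStep_swap d hxy)
    have h2 : Chain (d ∘ Equiv.swap x y) ((d ∘ Equiv.swap x y) ∘ f) := ih _
    have h3 : (d ∘ Equiv.swap x y) ∘ f = d ∘ (Equiv.swap x y * f) := rfl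
    exact h1.trans (h3 ▸ h2)


lemma strictMono_le {m : ℕ} (f : Fin m → Fin n) (hf : StrictMono f) (i : Fin m) :
    (i : ℕ) ≤ (f i : ℕ) := by
  suffices h : ∀ r (hr : r < m), r ≤ (f ⟨r, hr⟩ : ℕ) by
    simpa using h i.1 i.2
  intro r
  induction r with
  | zero => intro _; exact Nat.zero_le _
  | succ r ih =>
      intro hr1
      have hr : r < m := Nat.lt_of_succ_lt hr1
      have h2 : (f ⟨r, hr⟩ : Fin n) < f ⟨r + 1, hr1⟩ := hf (by simp [Fin.lt_def])
      have := ih hr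
      rw [Fin.lt_def] at h2
      omega

lemma F_eq_map {m : ℕ} (h : m ≤ n) :
    F n m = (univ : Finset (Fin m)).map (Fin.castLEEmb h) := by
  ext x
  simp only [mem_F, mem_map, mem_univ, true_and, Fin.castLEEmb]
  constructor
  · intro hx
    exact ⟨⟨(x : ℕ), hx⟩, by simp [Fin.castLE, Fin.ext_iff]⟩
  · rintro ⟨a, rfl⟩
    simpa using a.isLt

lemma sum_F {m : ℕ} (h : m ≤ n) (g : Fin n → ℝ) :
    ∑ i ∈ F n m, g i = ∑ i : Fin m, g (Fin.castLE h i) := by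
  rw [F_eq_map h, Finset.sum_map]
  rfl

/-- For an antitone `g`, the sum over any finset is at most the sum over the
initial segment of the same cardinality. -/
lemma sum_le_initial {g : Fin n → ℝ} (hg : Antitone g) (B : Finset (Fin n)) :
    ∑ b ∈ B, g b ≤ ∑ i ∈ F n B.card, g i := by
  have hcard : B.card ≤ n := by simpa using Finset.card_le_card (Finset.subset_univ B)
  set m := B.card with hm
  have e := B.orderIsoOfFin hm.symm
  have hmono : StrictMono (fun i : Fin m => ((e i : Fin n))) :=
    fun a b hab => by exact_mod_cast (e.lt_iff_lt.2 hab)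
  have h1 : ∑ b ∈ B, g b = ∑ i : Fin m, g (e i) := by
    rw [← Finset.sum_coe_sort B g]
    exact (Fintype.sum_equiv e.toEquiv _ _ (fun i => rfl)).symm
  rw [h1, sum_F hcard]
  apply Finset.sum_le_sum
  intro i _
  apply hg
  rw [Fin.le_def]
  simpa using strictMono_le _ hmono i


lemma maj_chain (N : ℕ) : ∀ (v d : Fin n → ℝ),
    (univ.filter (fun i => v i ≠ d i)).card = N →
    Antitone v → Antitone d →
    (∀ m : ℕ, ∑ i ∈ F n m, v i ≤ ∑ i ∈ F n m, d i) →
    (∑ i, v i = ∑ i, d i) → Chain d v := by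
  induction N using Nat.strong_induction_on with
  | _ N ih =>
  intro v d hcard hv hd hmaj htot
  by_cases hvd : v = d
  · exact hvd ▸ Relation.ReflTransGen.refl
  -- there is an index where v < d
  have hS1 : (univ.filter (fun i => v i < d i)).Nonempty := by
    by_contra h
    rw [Finset.not_nonempty_iff_eq_empty, Finset.filter_eq_empty_iff] at h
    have hle : ∀ i ∈ (univ : Finset (Fin n)), d i ≤ v i :=
      fun i _ => not_lt.1 (h (mem_univ i))
    exact hvd (funext fun i =>
      ((Finset.sum_eq_sum_iff_of_le hle).1 htot.symm i (mem_univ i)).symm)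
  set j := (univ.filter (fun i => v i < d i)).max' hS1 with hjdef
  have hjmem : j ∈ univ.filter (fun i => v i < d i) := Finset.max'_mem _ hS1
  have hj : v j < d j := (Finset.mem_filter.1 hjmem).2
  have hjmax : ∀ i, v i < d i → i ≤ j := fun i hi => Finset.le_max' _ i (by simp [hi])
  have hafter : ∀ i, j < i → d i ≤ v i :=
    fun i hi => not_lt.1 fun hc => absurd (hjmax i hc) (not_le.2 hi)
  -- partial sums of the difference
  have hFj : (0:ℝ) ≤ ∑ i ∈ F n (j:ℕ), (d i - v i) := by
    rw [Finset.sum_sub_distrib]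
    linarith [hmaj (j:ℕ)]
  have hFsdiff : F n ((j:ℕ)+1) \ F n (j:ℕ) = {j} := by
    ext x
    simp only [Finset.mem_sdiff, mem_F, Finset.mem_singleton, Fin.ext_iff]
    omega
  have hFj1 : ∑ i ∈ F n ((j:ℕ)+1), (d i - v i) ≥ d j - v j := by
    have := Finset.sum_sdiff (f := fun i => d i - v i) (F_subset (Nat.le_succ (j:ℕ)))
    rw [← this, hFsdiff, Finset.sum_singleton]
    linarith
  -- there is an index after j where d < v
  have hS2 : (univ.filter (fun i => j < i ∧ d i < v i)).Nonempty := by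
    by_contra hcon
    rw [Finset.not_nonempty_iff_eq_empty, Finset.filter_eq_empty_iff] at hcon
    have heq : ∀ i, j < i → d i - v i = 0 := by
      intro i hi
      have h1 := hcon (mem_univ i)
      push_neg at h1
      have := h1 hi
      have := hafter i hi
      linarith
    have hsplit := Finset.sum_sdiff (f := fun i => d i - v i)
      (Finset.subset_univ (F n ((j:ℕ)+1)))
    have hzero : ∑ i ∈ univ \ F n ((j:ℕ)+1), (d i - v i) = 0 := by
      apply Finset.sum_eq_zero
      intro x hx
      rw [Finset.mem_sdiff, mem_F] at hx
      exact heq x (by rw [Fin.lt_def]; omega)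
    have htot' : ∑ i : Fin n, (d i - v i) = 0 := by
      rw [Finset.sum_sub_distrib]; linarith
    rw [hzero, htot'] at hsplit
    linarith
  set k := (univ.filter (fun i => j < i ∧ d i < v i)).min' hS2 with hkdef
  have hkmem : k ∈ univ.filter (fun i => j < i ∧ d i < v i) := Finset.min'_mem _ hS2
  have hjk : j < k := (Finset.mem_filter.1 hkmem).2.1
  have hk : d k < v k := (Finset.mem_filter.1 hkmem).2.2
  have hkmin : ∀ i, j < i → d i < v i → k ≤ i :=
    fun i h1 h2 => Finset.min'_le _ i (by simp [h1, h2])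
  have hbet : ∀ i, j < i → i < k → v i = d i := by
    intro i h1 h2
    refine le_antisymm ?_ (hafter i h1)
    by_contra hc
    exact absurd (hkmin i h1 (not_le.1 hc)) (not_le.2 h2)
  -- the T-transform
  set δ := min (d j - v j) (v k - d k) with hδdef
  have hδ1 : δ ≤ d j - v j := min_le_left _ _
  have hδ2 : δ ≤ v k - d k := min_le_right _ _
  have hδpos : 0 < δ := lt_min (by linarith) (by linarith)
  set d' := Function.update (Function.update d j (d j - δ)) k (d k + δ) with hd'def
  have hj' : d' j = d j - δ := by
    rw [hd'def, Function.update_of_ne (Ne.symm (ne_of_lt hjk)).symm, Function.update_self]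
  have hk' : d' k = d k + δ := by rw [hd'def, Function.update_self]
  have hoth : ∀ i, i ≠ j → i ≠ k → d' i = d i := by
    intro i h1 h2
    rw [hd'def, Function.update_of_ne h2, Function.update_of_ne h1]
  have hvjk : v k ≤ v j := hv hjk.le
  have hdjk : d k ≤ d j := hd hjk.le
  -- basic bounds
  have b1 : v j ≤ d' j := by rw [hj']; linarith
  have b2 : d' j ≤ d j := by rw [hj']; linarith
  have b3 : d k ≤ d' k := by rw [hk']; linarith
  have b4 : d' k ≤ v k := by rw [hk']; linarith
  have b5 : d k ≤ d' j := by rw [hj']; linarith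
  -- the step
  have hstep : MixStep d d' := by
    refine ⟨j, k, ne_of_lt hjk, ?_, ?_, hoth⟩
    · rw [Set.uIcc_of_ge hdjk]
      exact ⟨b5, b2⟩
    · rw [hj', hk']; ring
  -- pointwise description of d'
  have hpt : ∀ i, d' i = d i + ((if i = j then -δ else 0) + (if i = k then δ else 0)) := by
    intro i
    by_cases h1 : i = j
    · subst h1
      rw [hj', if_pos rfl, if_neg (ne_of_lt hjk)]; ring
    by_cases h2 : i = k
    · subst h2
      rw [hk', if_neg h1, if_pos rfl]; ring
    · rw [hoth i h1 h2, if_neg h1, if_neg h2]; ring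
  have hsum_d' : ∀ s : Finset (Fin n), ∑ i ∈ s, d' i =
      ∑ i ∈ s, d i + ((if j ∈ s then -δ else 0) + (if k ∈ s then δ else 0)) := by
    intro s
    rw [Finset.sum_congr rfl (fun i _ => hpt i), Finset.sum_add_distrib,
      Finset.sum_add_distrib, Finset.sum_ite_eq' s j (fun _ => -δ),
      Finset.sum_ite_eq' s k (fun _ => δ)]
  -- new data for induction
  have htotnew : ∑ i, v i = ∑ i, d' i := by
    rw [hsum_d' univ, if_pos (mem_univ j), if_pos (mem_univ k)]
    linarith
  have hmajnew : ∀ m : ℕ, ∑ i ∈ F n m, v i ≤ ∑ i ∈ F n m, d' i := by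
    intro m
    rw [hsum_d' (F n m)]
    by_cases hjm : (j:ℕ) < m
    · by_cases hkm : (k:ℕ) < m
      · rw [if_pos (mem_F.2 hjm), if_pos (mem_F.2 hkm)]
        linarith [hmaj m]
      · rw [if_pos (mem_F.2 hjm), if_neg (fun hc => hkm (mem_F.1 hc))]
        -- need: ∑ v ≤ ∑ d - δ on F m, where j < m ≤ k
        have hsub : F n ((j:ℕ)+1) ⊆ F n m := F_subset (by omega)
        have hzero : ∑ i ∈ F n m \ F n ((j:ℕ)+1), (d i - v i) = 0 := by
          apply Finset.sum_eq_zero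
          intro x hx
          rw [Finset.mem_sdiff, mem_F, mem_F] at hx
          have hxj : j < x := by rw [Fin.lt_def]; omega
          have hxk : x < k := by rw [Fin.lt_def]; omega
          rw [hbet x hxj hxk]; ring
        have hsplit := Finset.sum_sdiff (f := fun i => d i - v i) hsub
        rw [hzero] at hsplit
        have : ∑ i ∈ F n m, (d i - v i) ≥ δ := by
          rw [← hsplit]
          linarith [hFj1]
        rw [Finset.sum_sub_distrib] at this
        linarith
    · rw [if_neg (fun hc => hjm (mem_F.1 hc)),
        if_neg (fun hc => absurd (mem_F.1 hc) (by rw [Fin.lt_def] at hjk; omega))]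
      linarith [hmaj m]
  have hd'ant : Antitone d' := by
    intro a b hab
    rcases eq_or_lt_of_le hab with rfl | hab'
    · exact le_refl _
    by_cases haj : a = j
    · subst haj
      by_cases hbk : b = k
      · subst hbk; linarith
      · rw [hoth b (ne_of_gt hab') hbk]
        rcases lt_or_gt_of_ne hbk with hbk' | hbk'
        · have h1 := hbet b hab' hbk'
          have h2 : v b ≤ v j := hv hab'.le
          linarith
        · have h2 : d b ≤ d k := hd hbk'.le
          linarith
    by_cases hak : a = k
    · subst hak
      have hbj : b ≠ j := fun h => absurd (h ▸ hab') (by intro hc; exact absurd (hc.trans hjk) (lt_irrefl _))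
      have hbk : b ≠ k := ne_of_gt hab'
      rw [hoth b hbj hbk]
      have : d b ≤ d k := hd hab'.le
      linarith
    · rw [hoth a haj hak]
      by_cases hbj : b = j
      · subst hbj
        have : d j ≤ d a := hd hab'.le
        linarith
      by_cases hbk : b = k
      · subst hbk
        rcases lt_or_gt_of_ne haj with haj' | haj'
        · have : d j ≤ d a := hd haj'.le
          linarith
        · have h1 := hbet a haj' hab'
          have h2 : v k ≤ v a := hv hab'.le
          linarith
      · rw [hoth b hbj hbk]
        exact hd hab
  -- the number of disagreements strictly decreases
  have hsubset : univ.filter (fun i => v i ≠ d' i) ⊆ univ.filter (fun i => v i ≠ d i) := by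
    intro i hi
    rw [Finset.mem_filter] at *
    refine ⟨mem_univ _, ?_⟩
    by_cases h1 : i = j
    · subst h1; exact ne_of_lt hj
    by_cases h2 : i = k
    · subst h2; exact ne_of_gt hk
    · rw [← hoth i h1 h2]; exact hi.2
  have hssub : univ.filter (fun i => v i ≠ d' i) ⊂ univ.filter (fun i => v i ≠ d i) := by
    rw [Finset.ssubset_iff_of_subset hsubset]
    rcases le_total (d j - v j) (v k - d k) with hc | hc
    · refine ⟨j, by simp [ne_of_lt hj], ?_⟩
      simp only [Finset.mem_filter, not_and, Finset.mem_univ, true_implies, not_not]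
      rw [hj', hδdef, min_eq_left hc]; ring
    · refine ⟨k, by simp [ne_of_gt hk], ?_⟩
      simp only [Finset.mem_filter, not_and, Finset.mem_univ, true_implies, not_not]
      rw [hk', hδdef, min_eq_right hc]; ring
  have hcardlt : (univ.filter (fun i => v i ≠ d' i)).card < N :=
    hcard ▸ Finset.card_lt_card hssub
  exact Relation.ReflTransGen.head hstep
    (ih _ hcardlt v d' rfl hv hd'ant hmajnew htotnew)


lemma realize_step (lam : Fin n → ℝ) (u u' : Fin n → ℝ) (hstep : MixStep u u')
    (hu : ∃ w ∈ Matrix.unitaryGroup (Fin n) ℂ, ∀ i, (u i : ℂ) =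
      (w * Matrix.diagonal (fun j => (lam j : ℂ)) * star w) i i) :
    ∃ w ∈ Matrix.unitaryGroup (Fin n) ℂ, ∀ i, (u' i : ℂ) =
      (w * Matrix.diagonal (fun j => (lam j : ℂ)) * star w) i i := by
  obtain ⟨j, k, hjk, hmem, hsum, hoth⟩ := hstep
  obtain ⟨w, hw, hwd⟩ := hu
  set D := Matrix.diagonal (fun j => (lam j : ℂ)) with hD
  set X := w * D * star w with hX
  have hDh : Dᴴ = D := by
    rw [hD, Matrix.diagonal_conjTranspose]
    congr 1
    funext a
    simp [Pi.star_def, Complex.star_def, Complex.conj_ofReal]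
  have hXh : Xᴴ = X := by
    rw [hX]
    calc (w * D * star w)ᴴ = (star w)ᴴ * (w * D)ᴴ := by rw [Matrix.conjTranspose_mul]
    _ = (star w)ᴴ * (Dᴴ * wᴴ) := by rw [Matrix.conjTranspose_mul]
    _ = w * D * star w := by
        rw [hDh]
        simp [Matrix.star_eq_conjTranspose, Matrix.mul_assoc]
  have hXkj : X k j = (starRingEnd ℂ) (X j k) := by
    conv_lhs => rw [← hXh]
    rfl
  set r := (X j k).re with hr
  set f : ℝ → ℝ := fun θ =>
    Real.cos θ ^ 2 * u j + Real.sin θ ^ 2 * u k + 2 * Real.cos θ * Real.sin θ * r with hf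
  have hf0 : f 0 = u j := by simp [hf]
  have hfp : f (Real.pi / 2) = u k := by simp [hf]
  have hcont : ContinuousOn f (Set.uIcc 0 (Real.pi / 2)) := by
    apply Continuous.continuousOn
    fun_prop
  have htarget : u' j ∈ Set.uIcc (f 0) (f (Real.pi / 2)) := by rw [hf0, hfp]; exact hmem
  obtain ⟨θ, -, hθ⟩ := intermediate_value_uIcc hcont htarget
  set c := Real.cos θ with hc
  set s := Real.sin θ with hs
  have hcs : c ^ 2 + s ^ 2 = 1 := by rw [hc, hs]; exact Real.cos_sq_add_sin_sq θ
  have hcsC : (c : ℂ) ^ 2 + (s : ℂ) ^ 2 = 1 := by exact_mod_cast congrArg Complex.ofReal hcs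
  -- the rotation matrix
  set R : Matrix (Fin n) (Fin n) ℂ := Matrix.of fun a b =>
    if a = j then (if b = j then (c : ℂ) else if b = k then (s : ℂ) else 0)
    else if a = k then (if b = j then -(s : ℂ) else if b = k then (c : ℂ) else 0)
    else if a = b then 1 else 0 with hR
  have hRjj : R j j = (c : ℂ) := by simp [hR]
  have hRjk : R j k = (s : ℂ) := by simp [hR, hjk, hjk.symm]
  have hRkj : R k j = -(s : ℂ) := by simp [hR, hjk, hjk.symm]
  have hRkk : R k k = (c : ℂ) := by simp [hR, hjk, hjk.symm]
  have hRjx : ∀ x, x ≠ j → x ≠ k → R j x = 0 := by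
    intro x h1 h2; simp [hR, h1, h2]
  have hRkx : ∀ x, x ≠ j → x ≠ k → R k x = 0 := by
    intro x h1 h2; simp [hR, h1, h2, hjk.symm]
  have hRax : ∀ a x, a ≠ j → a ≠ k → R a x = if a = x then 1 else 0 := by
    intro a x h1 h2; simp [hR, h1, h2]
  have hconj : ∀ a b, (starRingEnd ℂ) (R a b) = R a b := by
    intro a b
    simp only [hR, Matrix.of_apply]
    split_ifs <;> simp
  have hstarR : ∀ x y, (star R) x y = R y x := by
    intro x y
    rw [Matrix.star_apply, Complex.star_def, hconj]
  have hpair : ∀ (g : Fin n → ℂ), (∀ x, x ≠ j → x ≠ k → g x = 0) →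
      ∑ x, g x = g j + g k := by
    intro g hg
    rw [← Finset.sum_pair hjk]
    refine (Finset.sum_subset (Finset.subset_univ _) ?_).symm
    intro x _ hx
    simp only [Finset.mem_insert, Finset.mem_singleton] at hx
    push_neg at hx
    exact hg x hx.1 hx.2
  -- R is unitary
  have hRunit : R ∈ Matrix.unitaryGroup (Fin n) ℂ := by
    rw [Matrix.mem_unitaryGroup_iff]
    ext a b
    rw [Matrix.mul_apply]
    have hsummand : ∀ x, R a x * (star R) x b = R a x * R b x := fun x => by rw [hstarR]
    rw [Finset.sum_congr rfl (fun x _ => hsummand x)]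
    by_cases haj : a = j
    · rw [haj]
      rw [hpair _ (fun x h1 h2 => by rw [hRjx x h1 h2, zero_mul]), hRjj, hRjk]
      by_cases hbj : b = j
      · rw [hbj, hRjj, hRjk, Matrix.one_apply_eq]
        linear_combination hcsC
      · by_cases hbk : b = k
        · rw [hbk, hRkj, hRkk, Matrix.one_apply_ne hjk]
          ring
        · rw [hRax b j hbj hbk, if_neg hbj,
            hRax b k hbj hbk, if_neg hbk,
            Matrix.one_apply_ne (fun h => hbj h.symm)]
          ring
    · by_cases hak : a = k
      · rw [hak]
        rw [hpair _ (fun x h1 h2 => by rw [hRkx x h1 h2, zero_mul]), hRkj, hRkk]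
        by_cases hbj : b = j
        · rw [hbj, hRjj, hRjk, Matrix.one_apply_ne hjk.symm]
          ring
        · by_cases hbk : b = k
          · rw [hbk, hRkj, hRkk, Matrix.one_apply_eq]
            linear_combination hcsC
          · rw [hRax b j hbj hbk, if_neg hbj,
              hRax b k hbj hbk, if_neg hbk,
              Matrix.one_apply_ne (fun h => hbk h.symm)]
            ring
      · rw [Finset.sum_eq_single a (fun x _ hx => by
            rw [hRax a x haj hak, if_neg (fun h => hx h.symm), zero_mul])
            (fun h => absurd (mem_univ a) h)]
        rw [hRax a a haj hak, if_pos rfl, one_mul]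
        by_cases hbj : b = j
        · rw [hbj, hRjx a haj hak, Matrix.one_apply_ne (haj ∘ Eq.symm ∘ Eq.symm) ]
        · by_cases hbk : b = k
          · rw [hbk, hRkx a haj hak, Matrix.one_apply_ne hak]
          · rw [hRax b a hbj hbk, Matrix.one_apply]
            by_cases hab : a = b
            · rw [if_pos hab, if_pos hab.symm]
            · rw [if_neg hab, if_neg (fun h => hab h.symm)]
  -- conjugating by R
  have hY : (R * w) * D * star (R * w) = R * X * star R := by
    rw [hX, Matrix.star_mul]
    simp only [Matrix.mul_assoc]
  refine ⟨R * w, mul_mem hRunit hw, ?_⟩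
  intro i
  rw [hY]
  have hRXapp : ∀ a y, (R * X) a y = ∑ x, R a x * X x y := fun a y => Matrix.mul_apply
  have hYapp : ∀ a, (R * X * star R) a a = ∑ y, (R * X) a y * R a y := by
    intro a
    rw [Matrix.mul_apply]
    exact Finset.sum_congr rfl (fun y _ => by rw [hstarR])
  have hRXj : ∀ y, (R * X) j y = (c : ℂ) * X j y + (s : ℂ) * X k y := by
    intro y
    rw [hRXapp, hpair _ (fun x h1 h2 => by rw [hRjx x h1 h2, zero_mul]), hRjj, hRjk]
  have hRXk : ∀ y, (R * X) k y = -(s : ℂ) * X j y + (c : ℂ) * X k y := by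
    intro y
    rw [hRXapp, hpair _ (fun x h1 h2 => by rw [hRkx x h1 h2, zero_mul]), hRkj, hRkk]
  have e1 : X j j = ((u j : ℝ) : ℂ) := (hwd j).symm
  have e2 : X k k = ((u k : ℝ) : ℂ) := (hwd k).symm
  have e3 : X j k + X k j = ((2 * r : ℝ) : ℂ) := by
    rw [hXkj, Complex.add_conj, hr]
  by_cases hij : i = j
  · rw [hij]
    rw [hYapp, hpair _ (fun y h1 h2 => by rw [hRjx y h1 h2, mul_zero]), hRjj, hRjk,
      hRXj, hRXj]
    have expand : ((c : ℂ) * X j j + (s : ℂ) * X k j) * (c : ℂ)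
        + ((c : ℂ) * X j k + (s : ℂ) * X k k) * (s : ℂ)
        = (c : ℂ) ^ 2 * X j j + (s : ℂ) ^ 2 * X k k
          + (c : ℂ) * (s : ℂ) * (X j k + X k j) := by ring
    rw [expand, e1, e2, e3, ← hθ]
    rw [hf]
    simp only [← hc, ← hs]
    push_cast
    ring
  · by_cases hik : i = k
    · rw [hik]
      rw [hYapp, hpair _ (fun y h1 h2 => by rw [hRkx y h1 h2, mul_zero]), hRkj, hRkk,
        hRXk, hRXk]
      have expand : (-(s : ℂ) * X j j + (c : ℂ) * X k j) * -(s : ℂ)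
          + (-(s : ℂ) * X j k + (c : ℂ) * X k k) * (c : ℂ)
          = (s : ℂ) ^ 2 * X j j + (c : ℂ) ^ 2 * X k k
            - (c : ℂ) * (s : ℂ) * (X j k + X k j) := by ring
      rw [expand, e1, e2, e3]
      have hu'k : u' k = u j + u k - u' j := by linarith [hsum]
      rw [hu'k, ← hθ, hf]
      simp only [← hc, ← hs]
      push_cast
      linear_combination -((u j : ℂ) + (u k : ℂ)) * hcsC
    · rw [hYapp, Finset.sum_eq_single i (fun y _ hy => by
          rw [hRax i y hij hik, if_neg (fun h => hy h.symm), mul_zero])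
          (fun h => absurd (mem_univ i) h)]
      rw [hRax i i hij hik, if_pos rfl, mul_one, hRXapp,
        Finset.sum_eq_single i (fun x _ hx => by
          rw [hRax i x hij hik, if_neg (fun h => hx h.symm), zero_mul])
          (fun h => absurd (mem_univ i) h),
        hRax i i hij hik, if_pos rfl, one_mul, hoth i hij hik]
      exact hwd i


lemma easy_dir (lam v : Fin n → ℝ) (w : Matrix (Fin n) (Fin n) ℂ)
    (hw : w ∈ Matrix.unitaryGroup (Fin n) ℂ)
    (hwd : ∀ i, (v i : ℂ) = (w * Matrix.diagonal (fun j => (lam j : ℂ)) * star w) i i) :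
    v ∈ convexHull ℝ (Set.range fun σ : Equiv.Perm (Fin n) => lam ∘ σ) := by
  have hw1 : w * star w = 1 := Matrix.mem_unitaryGroup_iff.1 hw
  have hw2 : star w * w = 1 := Matrix.mem_unitaryGroup_iff'.1 hw
  have hdiag : ∀ i, v i = ∑ a, Complex.normSq (w i a) * lam a := by
    intro i
    have h1 : (w * Matrix.diagonal (fun j => (lam j : ℂ)) * star w) i i
        = ∑ a, ((Complex.normSq (w i a) * lam a : ℝ) : ℂ) := by
      rw [Matrix.mul_apply]
      refine Finset.sum_congr rfl (fun a _ => ?_)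
      rw [Matrix.mul_diagonal, Matrix.star_apply]
      push_cast
      calc w i a * (lam a : ℂ) * star (w i a)
          = w i a * star (w i a) * (lam a : ℂ) := by ring
        _ = (Complex.normSq (w i a) : ℂ) * (lam a : ℂ) := by
            rw [Complex.star_def, Complex.mul_conj]
    have h2 := (hwd i).trans h1
    rw [← Complex.ofReal_sum] at h2
    exact_mod_cast h2
  have hrow : ∀ i, ∑ a, Complex.normSq (w i a) = 1 := by
    intro i
    have h1 : (w * star w) i i = (1 : Matrix (Fin n) (Fin n) ℂ) i i := by rw [hw1]
    rw [Matrix.mul_apply, Matrix.one_apply_eq] at h1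
    have h2 : ∑ a, ((Complex.normSq (w i a) : ℝ) : ℂ) = (1 : ℂ) := by
      rw [← h1]
      refine (Finset.sum_congr rfl (fun a _ => ?_)).symm
      rw [Matrix.star_apply, Complex.star_def, Complex.mul_conj]
    rw [← Complex.ofReal_sum] at h2
    exact_mod_cast h2
  have hcol : ∀ a, ∑ i, Complex.normSq (w i a) = 1 := by
    intro a
    have h1 : (star w * w) a a = (1 : Matrix (Fin n) (Fin n) ℂ) a a := by rw [hw2]
    rw [Matrix.mul_apply, Matrix.one_apply_eq] at h1
    have h2 : ∑ i, ((Complex.normSq (w i a) : ℝ) : ℂ) = (1 : ℂ) := by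
      rw [← h1]
      refine (Finset.sum_congr rfl (fun i _ => ?_)).symm
      rw [Matrix.star_apply, Complex.star_def]
      rw [mul_comm, Complex.mul_conj]
    rw [← Complex.ofReal_sum] at h2
    exact_mod_cast h2
  set M : Matrix (Fin n) (Fin n) ℝ := Matrix.of fun i a => Complex.normSq (w i a) with hM
  have hMds : M ∈ doublyStochastic ℝ (Fin n) := by
    rw [mem_doublyStochastic_iff_sum]
    exact ⟨fun i a => Complex.normSq_nonneg _, hrow, hcol⟩
  obtain ⟨wt, hwt0, hwt1, hwtM⟩ := exists_eq_sum_perm_of_mem_doublyStochastic hMds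
  have hv2 : v = ∑ σ : Equiv.Perm (Fin n), wt σ • (lam ∘ σ) := by
    funext i
    have hMia : ∀ a, M i a = ∑ σ : Equiv.Perm (Fin n), wt σ * (σ.permMatrix ℝ) i a := by
      intro a
      rw [← hwtM]
      simp [Finset.sum_apply, Matrix.sum_apply, Matrix.smul_apply, smul_eq_mul]
    calc v i = ∑ a, M i a * lam a := hdiag i
      _ = ∑ a, ∑ σ : Equiv.Perm (Fin n), wt σ * (σ.permMatrix ℝ) i a * lam a := by
          refine Finset.sum_congr rfl (fun a _ => ?_)
          rw [hMia, Finset.sum_mul]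
      _ = ∑ σ : Equiv.Perm (Fin n), ∑ a, wt σ * (σ.permMatrix ℝ) i a * lam a :=
          Finset.sum_comm
      _ = ∑ σ : Equiv.Perm (Fin n), wt σ * lam (σ i) := by
          refine Finset.sum_congr rfl (fun σ _ => ?_)
          simp [Equiv.Perm.permMatrix, PEquiv.toMatrix_apply, Equiv.toPEquiv_apply,
            ite_mul, mul_ite, Finset.sum_ite_eq', eq_comm]
      _ = (∑ σ : Equiv.Perm (Fin n), wt σ • (lam ∘ σ)) i := by
          simp [Finset.sum_apply]
  rw [hv2]
  have hmem := Finset.centerMass_mem_convexHull (t := (univ : Finset (Equiv.Perm (Fin n))))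
    (w := wt) (z := fun σ => lam ∘ σ) (fun i _ => hwt0 i)
    (by rw [hwt1]; norm_num) (fun i _ => Set.mem_range_self i)
  rwa [Finset.centerMass_eq_of_sum_1 _ _ hwt1] at hmem


lemma realize_chain (lam v : Fin n → ℝ) (h : Chain lam v) :
    ∃ w ∈ Matrix.unitaryGroup (Fin n) ℂ, ∀ i, (v i : ℂ) =
      (w * Matrix.diagonal (fun j => (lam j : ℂ)) * star w) i i := by
  induction h with
  | refl =>
      refine ⟨1, Submonoid.one_mem _, fun i => ?_⟩
      simp
  | tail hcab hstep ih => exact realize_step lam _ _ hstep ih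

lemma antitone_sortNeg (g : Fin n → ℝ) : Antitone (g ∘ Tuple.sort (fun i => -g i)) := by
  have h := Tuple.monotone_sort (fun i => -g i)
  intro a b hab
  have h2 := h hab
  simp only [Function.comp_apply] at h2 ⊢
  linarith

lemma hFcard {m : ℕ} (h : m ≤ n) : (F n m).card = m := by
  rw [F_eq_map h]; simp

lemma hard_dir (lam v : Fin n → ℝ)
    (hv : v ∈ convexHull ℝ (Set.range fun σ : Equiv.Perm (Fin n) => lam ∘ σ)) :
    ∃ w ∈ Matrix.unitaryGroup (Fin n) ℂ, ∀ i, (v i : ℂ) =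
      (w * Matrix.diagonal (fun j => (lam j : ℂ)) * star w) i i := by
  classical
  set τ := Tuple.sort (fun i => -lam i) with hτ
  set lam' := lam ∘ τ with hlam'
  have hlam'a : Antitone lam' := antitone_sortNeg lam
  set S : Set (Fin n → ℝ) := {x | (∑ i, x i = ∑ i, lam i) ∧
    ∀ B : Finset (Fin n), ∑ i ∈ B, x i ≤ ∑ i ∈ F n B.card, lam' i} with hS
  have hconv : Convex ℝ S := by
    intro x hx y hy a b ha hb hab
    constructor
    · simp only [Pi.add_apply, Pi.smul_apply, smul_eq_mul]
      rw [Finset.sum_add_distrib, ← Finset.mul_sum, ← Finset.mul_sum, hx.1, hy.1,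
        ← add_mul, hab, one_mul]
    · intro B
      simp only [Pi.add_apply, Pi.smul_apply, smul_eq_mul]
      rw [Finset.sum_add_distrib, ← Finset.mul_sum, ← Finset.mul_sum]
      have h1 := mul_le_mul_of_nonneg_left (hx.2 B) ha
      have h2 := mul_le_mul_of_nonneg_left (hy.2 B) hb
      calc a * ∑ i ∈ B, x i + b * ∑ i ∈ B, y i
          ≤ a * ∑ i ∈ F n B.card, lam' i + b * ∑ i ∈ F n B.card, lam' i := by linarith
        _ = ∑ i ∈ F n B.card, lam' i := by rw [← add_mul, hab, one_mul]
  have hrange : ∀ σ : Equiv.Perm (Fin n), (lam ∘ σ) ∈ S := by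
    intro σ
    constructor
    · exact Equiv.sum_comp σ lam
    · intro B
      have hinj : Function.Injective (fun i => τ.symm (σ i)) :=
        fun x y hxy => σ.injective (τ.symm.injective hxy)
      have h1 : ∑ i ∈ B, (lam ∘ σ) i = ∑ i ∈ B.image (fun i => τ.symm (σ i)), lam' i := by
        rw [Finset.sum_image (fun x _ y _ h => hinj h)]
        refine Finset.sum_congr rfl fun i _ => ?_
        simp [hlam', Function.comp]
      rw [h1]
      have h2 := sum_le_initial hlam'a (B.image fun i => τ.symm (σ i))
      rwa [Finset.card_image_of_injective _ hinj] at h2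
  have hvS : v ∈ S := convexHull_min (Set.range_subset_iff.2 hrange) hconv hv
  set π := Tuple.sort (fun i => -v i) with hπ
  set v' := v ∘ π with hv'
  have hv'a : Antitone v' := antitone_sortNeg v
  have hmaj : ∀ m : ℕ, ∑ i ∈ F n m, v' i ≤ ∑ i ∈ F n m, lam' i := by
    intro m
    by_cases hm : m ≤ n
    · have himg : ∑ i ∈ F n m, v' i = ∑ i ∈ (F n m).image π, v i := by
        rw [Finset.sum_image (fun x _ y _ h => π.injective h)]
        rfl
      have h2 := hvS.2 ((F n m).image π)
      rw [Finset.card_image_of_injective _ π.injective, hFcard hm] at h2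
      rw [himg]; exact h2
    · have huniv : F n m = univ := by
        ext i; rw [mem_F]
        simp only [Finset.mem_univ, iff_true]
        omega
      rw [huniv]
      have e1 : ∑ i, v' i = ∑ i, v i := Equiv.sum_comp π v
      have e2 : ∑ i, lam' i = ∑ i, lam i := Equiv.sum_comp τ lam
      rw [e1, e2, hvS.1]
  have htot : ∑ i, v' i = ∑ i, lam' i := by
    have e1 : ∑ i, v' i = ∑ i, v i := Equiv.sum_comp π v
    have e2 : ∑ i, lam' i = ∑ i, lam i := Equiv.sum_comp τ lam
    rw [e1, e2, hvS.1]
  have hchain1 : Chain lam' v' := maj_chain _ v' lam' rfl hv'a hlam'a hmaj htot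
  have hchain : Chain lam v := by
    have c1 : Chain lam lam' := chain_perm τ lam
    have c2 : Chain v' (v' ∘ (π⁻¹ : Equiv.Perm (Fin n))) := chain_perm π⁻¹ v'
    have hvv : v' ∘ (π⁻¹ : Equiv.Perm (Fin n)) = v := by
      funext i
      simp [hv', Function.comp]
    exact (c1.trans hchain1).trans (hvv ▸ c2)
  exact realize_chain lam v hchain

end HornAux

open Matrix

/-- **Horn's linear convexity theorem**: the set of diagonal vectors of the unitary
conjugation orbit of the real diagonal matrix `diag(λ)` (inside the Hermitian matrices)
is the convex hull of the set of all coordinate permutations of `λ`. -/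
theorem horn_convexity (n : ℕ) (lam : Fin n → ℝ) :
    {v : Fin n → ℝ |
      ∃ w ∈ Matrix.unitaryGroup (Fin n) ℂ,
        ∀ i, (v i : ℂ) =
          (w * Matrix.diagonal (fun j => (lam j : ℂ)) * star w) i i}
    = convexHull ℝ (Set.range fun σ : Equiv.Perm (Fin n) => lam ∘ σ) := by
  ext v
  simp only [Set.mem_setOf_eq]
  constructor
  · rintro ⟨w, hw, hwd⟩
    exact HornAux.easy_dir lam v w hw hwd
  · intro hv
    exact HornAux.hard_dir lam v hv
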